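/- Let 0 < β < 1, t₀ > 0 and 0 < δ < 1/2. If s₁ < −(2/β)·artanh( tan(πβ(1 − 2δ)/2) / tan(πβ/2) ) + ln t₀, then ∫_{-∞}^{s₁} f_RQ(s) ds < δ. -/

import Mathlib

open MeasureTheory Real

/-- The Cole–Cole (RQ) distribution of relaxation times in the variable `s = ln t`. -/
noncomputable def fRQ (β t₀ : ℝ) (s : ℝ) : ℝ :=
  Real.sin (β * π) / (2 * π * (Real.cosh (β * (s - Real.log t₀)) + Real.cos (β * π)))

/-- The inverse hyperbolic tangent. -/
noncomputable def artanh (x : ℝ) : ℝ := (1 / 2) * Real.log ((1 + x) / (1 - x))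

section aux
open Filter

lemma my_tanh_eq_exp (x : ℝ) :
    Real.tanh x = (Real.exp (2*x) - 1) / (Real.exp (2*x) + 1) := by
  rw [Real.tanh_eq_sinh_div_cosh, Real.sinh_eq, Real.cosh_eq, two_mul, Real.exp_add,
    Real.exp_neg]
  have h1 : Real.exp x ≠ 0 := (Real.exp_pos x).ne'
  have h2 : Real.exp x * Real.exp x + 1 ≠ 0 := by positivity
  have h3 : Real.exp x + (Real.exp x)⁻¹ ≠ 0 := by positivity
  field_simp

lemma my_tanh_lt_tanh {x y : ℝ} (h : x < y) : Real.tanh x < Real.tanh y := by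
  rw [my_tanh_eq_exp, my_tanh_eq_exp]
  have ha : (0:ℝ) < Real.exp (2*x) := Real.exp_pos _
  have hb : (0:ℝ) < Real.exp (2*y) := Real.exp_pos _
  have hab : Real.exp (2*x) < Real.exp (2*y) := Real.exp_lt_exp.2 (by linarith)
  rw [div_lt_div_iff₀ (by linarith) (by linarith)]
  nlinarith

lemma my_tanh_artanh {r : ℝ} (h0 : -1 < r) (h1 : r < 1) :
    Real.tanh (_root_.artanh r) = r := by
  rw [my_tanh_eq_exp, _root_.artanh]
  have h2 : (0:ℝ) < (1+r)/(1-r) := by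
    apply div_pos <;> linarith
  rw [show 2 * ((1/2 : ℝ) * Real.log ((1+r)/(1-r))) = Real.log ((1+r)/(1-r)) by ring,
    Real.exp_log h2]
  have h3 : (1:ℝ) - r ≠ 0 := by linarith
  field_simp
  ring

lemma my_tendsto_tanh_atBot : Tendsto Real.tanh atBot (nhds (-1)) := by
  have h2x : Tendsto (fun x : ℝ => Real.exp (2*x)) atBot (nhds 0) :=
    Real.tendsto_exp_atBot.comp (Tendsto.const_mul_atBot two_pos tendsto_id)
  have hs : Tendsto (fun x : ℝ => Real.exp (2*x) - 1) atBot (nhds (0-1)) :=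
    h2x.sub tendsto_const_nhds
  have hd : Tendsto (fun x : ℝ => Real.exp (2*x) + 1) atBot (nhds (0+1)) :=
    h2x.add tendsto_const_nhds
  have := hs.div hd (by norm_num)
  simp only [zero_sub, zero_add, div_one] at this
  exact Tendsto.congr (fun x => (my_tanh_eq_exp x).symm) this

lemma my_hasDerivAt_tanh (y : ℝ) : HasDerivAt Real.tanh (1 / Real.cosh y ^ 2) y := by
  have h := (Real.hasDerivAt_sinh y).div (Real.hasDerivAt_cosh y) (Real.cosh_pos y).ne'
  have e : (fun t => Real.sinh t / Real.cosh t) = Real.tanh := by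
    funext t; rw [Real.tanh_eq_sinh_div_cosh]
  simp only [Pi.div_def] at h
  rw [e] at h
  refine h.congr_deriv ?_; congr 1
  nlinarith [Real.cosh_sq_sub_sinh_sq y]

lemma fRQ_hasDeriv (β t₀ : ℝ) (hβ₀ : 0 < β) (hβ₁ : β < 1) (s : ℝ) :
    HasDerivAt (fun s => (1/(β*π)) *
      Real.arctan (Real.tan (β*π/2) * Real.tanh (β*(s - Real.log t₀)/2)))
      (fRQ β t₀ s) s := by
  have hπ := Real.pi_pos
  set u₀ := Real.log t₀
  have hin : HasDerivAt (fun s : ℝ => β*(s - u₀)/2) (β*1/2) s :=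
    (((hasDerivAt_id s).sub_const u₀).const_mul β).div_const 2
  set x := β*(s - u₀)/2 with hx
  have htanh : HasDerivAt (fun s : ℝ => Real.tanh (β*(s - u₀)/2))
      (1 / Real.cosh x ^ 2 * (β*1/2)) s := by have := (my_hasDerivAt_tanh x).comp s hin; exact this
  have hmul := htanh.const_mul (Real.tan (β*π/2))
  have harc := (Real.hasDerivAt_arctan (Real.tan (β*π/2) * Real.tanh x)).comp s hmul
  have hfin := harc.const_mul (1/(β*π))
  refine hfin.congr_deriv ?_; symm
  have hB : 0 < Real.cos (β*π/2) := by
    apply Real.cos_pos_of_mem_Ioo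
    constructor <;> nlinarith
  have hA : 0 < Real.sin (β*π/2) := by
    apply Real.sin_pos_of_pos_of_lt_pi <;> nlinarith
  have hsin2 : Real.sin (β*π) = 2 * Real.sin (β*π/2) * Real.cos (β*π/2) := by
    rw [show β*π = 2*(β*π/2) by ring, Real.sin_two_mul]; ring
  have hcos2 : Real.cos (β*π) = 2 * Real.cos (β*π/2)^2 - 1 := by
    have h := Real.cos_two_mul (β*π/2)
    rw [show 2*(β*π/2) = β*π by ring] at h
    exact h
  have hpyth : Real.sin (β*π/2)^2 + Real.cos (β*π/2)^2 = 1 := Real.sin_sq_add_cos_sq _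
  have hch2 : Real.cosh (β*(s-u₀)) = Real.cosh x ^2 + Real.sinh x ^2 := by
    have h := Real.cosh_two_mul x
    rw [show 2*x = β*(s-u₀) by rw [hx]; ring_nf] at h
    exact h
  have hcsq : Real.cosh x ^2 = Real.sinh x ^2 + 1 := Real.cosh_sq x
  have hcpos := Real.cosh_pos x
  unfold fRQ
  rw [Real.tan_eq_sin_div_cos, Real.tanh_eq_sinh_div_cosh, hsin2, hcos2, hch2]
  set A := Real.sin (β*π/2)
  set B := Real.cos (β*π/2)
  set c := Real.cosh x
  set sh := Real.sinh x
  have h1 : (0:ℝ) < 1 + (A/B * (sh/c))^2 := by positivity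
  have hd : (0:ℝ) < c^2 + sh^2 + (2*B^2 - 1) := by nlinarith
  field_simp
  ring_nf
  linear_combination (2*B^2-1) * hcsq + (2*sh^2) * hpyth

lemma fRQ_nonneg (β t₀ : ℝ) (hβ₀ : 0 < β) (hβ₁ : β < 1) (s : ℝ) :
    0 ≤ fRQ β t₀ s := by
  have hπ := Real.pi_pos
  have hB : 0 < Real.cos (β*π/2) := by
    apply Real.cos_pos_of_mem_Ioo
    constructor <;> nlinarith
  have hcos2 : Real.cos (β*π) = 2 * Real.cos (β*π/2)^2 - 1 := by
    have h := Real.cos_two_mul (β*π/2)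
    rw [show 2*(β*π/2) = β*π by ring] at h
    exact h
  have hsin : 0 ≤ Real.sin (β*π) := by
    apply le_of_lt
    apply Real.sin_pos_of_pos_of_lt_pi <;> nlinarith
  have hcsh := Real.one_le_cosh (β*(s - Real.log t₀))
  apply div_nonneg hsin
  nlinarith

lemma fRQ_tendsto_atBot (β t₀ : ℝ) (hβ₀ : 0 < β) (hβ₁ : β < 1) :
    Filter.Tendsto (fun s => (1/(β*π)) *
      Real.arctan (Real.tan (β*π/2) * Real.tanh (β*(s - Real.log t₀)/2)))
      Filter.atBot (nhds (-(1/2))) := by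
  have hπ := Real.pi_pos
  set u₀ := Real.log t₀
  have hin : Tendsto (fun s : ℝ => β*(s - u₀)/2) atBot atBot := by
    apply Tendsto.atBot_div_const two_pos
    apply Tendsto.const_mul_atBot hβ₀
    exact tendsto_atBot_add_const_right _ (-u₀) tendsto_id |>.congr
      (fun x => by simp only [id_eq]; ring)
  have h1 : Tendsto (fun s : ℝ => Real.tan (β*π/2) * Real.tanh (β*(s - u₀)/2)) atBot
      (nhds (Real.tan (β*π/2) * (-1))) :=
    tendsto_const_nhds.mul (my_tendsto_tanh_atBot.comp hin)
  have h2 := (Real.continuous_arctan.tendsto _).comp h1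
  have h3 := h2.const_mul (1/(β*π))
  have h4 : (1/(β*π)) * Real.arctan (Real.tan (β*π/2) * (-1)) = -(1/2) := by
    rw [mul_neg_one, ← Real.tan_neg, Real.arctan_tan (by nlinarith) (by nlinarith)]
    field_simp
  rw [h4] at h3
  exact h3

end aux

/-- **Sufficient condition for a small lower truncation error of the RQ distribution.**
For `0 < β < 1`, `t₀ > 0`, `0 < δ < 1/2`, if
`s₁ < −(2/β) artanh(tan(πβ(1 − 2δ)/2)/tan(πβ/2)) + ln t₀` then
`∫_{-∞}^{s₁} f_RQ(s) ds < δ`. -/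
theorem fRQ_lower_truncation_small (β t₀ δ s₁ : ℝ) (hβ₀ : 0 < β) (hβ₁ : β < 1)
    (ht₀ : 0 < t₀) (hδ₀ : 0 < δ) (hδ₁ : δ < 1 / 2)
    (hs₁ : s₁ < -(2 / β) * _root_.artanh (Real.tan (π * β * (1 - 2 * δ) / 2) /
      Real.tan (π * β / 2)) + Real.log t₀) :
    ∫ s in Set.Iic s₁, fRQ β t₀ s < δ := by
  have hπ := Real.pi_pos
  set u₀ := Real.log t₀
  set G : ℝ → ℝ := fun s => (1/(β*π)) *
    Real.arctan (Real.tan (β*π/2) * Real.tanh (β*(s - u₀)/2)) with hG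
  -- the integral equals 1/2 + G s₁
  have key : ∫ s in Set.Iic s₁, fRQ β t₀ s = 1/2 + G s₁ := by
    have hrefl := integral_comp_neg_Ioi (-s₁) (fRQ β t₀)
    rw [neg_neg] at hrefl
    have hderiv : ∀ x ∈ Set.Ici (-s₁), HasDerivAt
        (fun x : ℝ => -((1/(β*π)) *
          Real.arctan (Real.tan (β*π/2) * Real.tanh (β*(-x - u₀)/2))))
        (fRQ β t₀ (-x)) x := by
      intro x _
      have h := ((fRQ_hasDeriv β t₀ hβ₀ hβ₁ (-x)).comp x (hasDerivAt_neg x)).neg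
      simp only [Function.comp_def] at h
      refine h.congr_deriv ?_; symm
      ring
    have hpos : ∀ x ∈ Set.Ioi (-s₁), 0 ≤ fRQ β t₀ (-x) := fun x _ =>
      fRQ_nonneg β t₀ hβ₀ hβ₁ (-x)
    have hlim : Filter.Tendsto (fun x : ℝ => -((1/(β*π)) *
        Real.arctan (Real.tan (β*π/2) * Real.tanh (β*(-x - u₀)/2))))
        Filter.atTop (nhds (1/2)) := by
      have := ((fRQ_tendsto_atBot β t₀ hβ₀ hβ₁).comp Filter.tendsto_neg_atTop_atBot).neg
      simp only [Function.comp_def] at this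
      convert this using 2
      norm_num
    have hval := integral_Ioi_of_hasDerivAt_of_nonneg' hderiv hpos hlim
    rw [hrefl] at hval
    rw [hval, hG]
    simp only [neg_neg]
    ring
  rw [key]
  -- now bound G s₁
  have hβπ : 0 < β * π := by positivity
  set T := Real.tan (π * β * (1 - 2 * δ) / 2) with hT
  set a := Real.tan (π * β / 2) with ha
  have hang1 : 0 < π * β * (1 - 2 * δ) / 2 := by nlinarith
  have hang2 : π * β * (1 - 2 * δ) / 2 < π * β / 2 := by nlinarith
  have hang3 : π * β / 2 < π / 2 := by nlinarith
  have hTpos : 0 < T := Real.tan_pos_of_pos_of_lt_pi_div_two hang1 (by linarith)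
  have hapos : 0 < a := Real.tan_pos_of_pos_of_lt_pi_div_two (by nlinarith) hang3
  have hTa : T < a := Real.tan_lt_tan_of_nonneg_of_lt_pi_div_two hang1.le hang3 hang2
  have hr0 : 0 < T / a := div_pos hTpos hapos
  have hr1 : T / a < 1 := (div_lt_one hapos).2 hTa
  -- from hs₁
  have hx₁ : β * (s₁ - u₀) / 2 < -(_root_.artanh (T / a)) := by
    have h : s₁ - u₀ < -(2 / β) * _root_.artanh (T / a) := by linarith
    have h2 : β * (s₁ - u₀) < β * (-(2 / β) * _root_.artanh (T / a)) :=
      (mul_lt_mul_iff_right₀ hβ₀).2 h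
    rw [show β * (-(2 / β) * _root_.artanh (T / a)) = -(2 * _root_.artanh (T / a)) by
      field_simp] at h2
    linarith
  have htanh : Real.tanh (β * (s₁ - u₀) / 2) < -(T / a) := by
    calc Real.tanh (β * (s₁ - u₀) / 2) < Real.tanh (-(_root_.artanh (T / a))) :=
          my_tanh_lt_tanh hx₁
      _ = -(T / a) := by rw [Real.tanh_neg, my_tanh_artanh (by linarith) hr1]
  have hmul : a * Real.tanh (β * (s₁ - u₀) / 2) < -T := by
    have := (mul_lt_mul_iff_right₀ hapos).2 htanh
    rw [show a * -(T / a) = -T by field_simp] at this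
    linarith
  have harc : Real.arctan (a * Real.tanh (β * (s₁ - u₀) / 2)) <
      -(π * β * (1 - 2 * δ) / 2) := by
    calc Real.arctan (a * Real.tanh (β * (s₁ - u₀) / 2)) < Real.arctan (-T) :=
          Real.arctan_strictMono hmul
      _ = -(π * β * (1 - 2 * δ) / 2) := by
          rw [Real.arctan_neg, hT, Real.arctan_tan (by linarith) (by linarith)]
  have hGb : G s₁ < -((1 - 2*δ)/2) := by
    rw [hG]
    have hba : Real.tan (β*π/2) = a := by rw [ha, mul_comm β π]
    rw [hba]
    have := (mul_lt_mul_iff_right₀ (show (0:ℝ) < 1/(β*π) by positivity)).2 harc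
    calc (1/(β*π)) * Real.arctan (a * Real.tanh (β*(s₁ - u₀)/2))
        < (1/(β*π)) * (-(π * β * (1 - 2 * δ) / 2)) := this
      _ = -((1 - 2*δ)/2) := by field_simp
  linarith
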